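/- Let u : ℝ → ℝ be continuous, bounded and square-integrable, and let X ∈ ℝ be a point where u attains its global maximum. Suppose the principal-value limit L := (1/π)·lim_{ε→0⁺} ∫_{|y|>ε} ( u(X) − u(X−y) ) / y² dy exists. Then L ≥ (2/π)·u(X) − (√(2/3)/π)·‖u‖_{L²(ℝ)}. -/

import Mathlib

open MeasureTheory Filter Set

/-- The truncated principal-value integral for the fractional Laplacian on `ℝ`. -/
noncomputable def pvIntegral (u : ℝ → ℝ) (x ε : ℝ) : ℝ :=
  (1 / Real.pi) * ∫ y in {y : ℝ | ε < |y|}, (u x - u (x - y)) / y ^ 2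

/-- `Λu(x) = L` in the principal-value sense. -/
def HasPVLambda (u : ℝ → ℝ) (x L : ℝ) : Prop :=
  Tendsto (fun ε => pvIntegral u x ε) (nhdsWithin 0 (Set.Ioi 0)) (nhds L)


lemma setEq (ε : ℝ) : {y : ℝ | ε < |y|} = Iio (-ε) ∪ Ioi ε := by
  ext y
  simp only [mem_setOf_eq, mem_union, mem_Iio, mem_Ioi, lt_abs]
  constructor
  · rintro (h | h); · right; exact h
    · left; linarith
  · rintro (h | h); · right; linarith
    · left; exact h

lemma measSet (ε : ℝ) : MeasurableSet {y : ℝ | ε < |y|} := by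
  rw [setEq]; exact measurableSet_Iio.union measurableSet_Ioi

lemma absRpowIntOn {a : ℝ} (ha : a < -1) {ε : ℝ} (hε : 0 < ε) :
    IntegrableOn (fun y : ℝ => |y| ^ a) {y : ℝ | ε < |y|} := by
  rw [setEq]
  have hIoi : IntegrableOn (fun y : ℝ => |y| ^ a) (Ioi ε) := by
    refine (integrableOn_Ioi_rpow_of_lt ha hε).congr_fun (fun y hy => ?_) measurableSet_Ioi
    rw [abs_of_pos (hε.trans hy)]
  refine IntegrableOn.union ?_ hIoi
  have m : MeasurableEmbedding (fun x : ℝ => -x) :=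
    (Homeomorph.neg ℝ).isClosedEmbedding.measurableEmbedding
  have : IntegrableOn (fun y : ℝ => |y| ^ a) (Iio (-ε)) (Measure.map Neg.neg volume) := by
    rw [m.integrableOn_map_iff]
    have : (Neg.neg ⁻¹' Iio (-ε) : Set ℝ) = Ioi ε := by
      ext x; simp only [mem_preimage, mem_Iio, mem_Ioi, neg_lt_neg_iff]
    rw [show ((fun x : ℝ => -x) ⁻¹' Iio (-ε)) = Ioi ε from this]
    refine hIoi.congr_fun (fun y _ => ?_) measurableSet_Ioi
    simp [abs_neg]
  rwa [Measure.map_neg_eq_self (volume : Measure ℝ)] at this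

lemma absRpowInt {a : ℝ} (ha : a < -1) {ε : ℝ} (hε : 0 < ε) :
    ∫ y in {y : ℝ | ε < |y|}, |y| ^ a = 2 * (-ε ^ (a + 1) / (a + 1)) := by
  have hIoi : IntegrableOn (fun y : ℝ => |y| ^ a) (Ioi ε) :=
    ((absRpowIntOn ha hε).mono_set (by rw [setEq]; exact subset_union_right))
  have hIio : IntegrableOn (fun y : ℝ => |y| ^ a) (Iio (-ε)) :=
    ((absRpowIntOn ha hε).mono_set (by rw [setEq]; exact subset_union_left))
  have hval : ∫ y in Ioi ε, |y| ^ a = -ε ^ (a + 1) / (a + 1) := by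
    rw [setIntegral_congr_fun measurableSet_Ioi
      (fun y hy => by rw [abs_of_pos (hε.trans hy)])]
    exact integral_Ioi_rpow_of_lt ha hε
  have hvalIio : ∫ y in Iio (-ε), |y| ^ a = -ε ^ (a + 1) / (a + 1) := by
    have h1 : ∫ y in Iio (-ε), |y| ^ a = ∫ y in Iic (-ε), |y| ^ a := by
      rw [← integral_Iic_eq_integral_Iio]
    rw [h1, ← integral_comp_neg_Ioi]
    simp only [abs_neg]
    exact hval
  rw [setEq, setIntegral_union ?disj measurableSet_Ioi hIio hIoi, hval, hvalIio]
  · ring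
  case disj =>
    intro s hs1 hs2 x hx; exfalso; have h1 := hs1 hx; have h2 := hs2 hx; simp only [mem_Iio, mem_Ioi] at h1 h2; linarith

lemma absrpow2 (y : ℝ) : |y| ^ (-2 : ℝ) = (y ^ 2)⁻¹ := by
  rw [show (-2 : ℝ) = ((-2 : ℤ) : ℝ) by norm_num, Real.rpow_intCast]
  rw [zpow_neg]
  norm_num

lemma absrpow4 (y : ℝ) : |y| ^ (-4 : ℝ) = (y ^ 4)⁻¹ := by
  rw [show (-4 : ℝ) = ((-4 : ℤ) : ℝ) by norm_num, Real.rpow_intCast]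
  rw [zpow_neg]
  norm_num
  calc |y| ^ 4 = (|y| ^ 2) ^ 2 := by ring
  _ = (y ^ 2) ^ 2 := by rw [sq_abs]
  _ = y ^ 4 := by ring

lemma invsqIntOn {ε : ℝ} (hε : 0 < ε) :
    IntegrableOn (fun y : ℝ => (y ^ 2)⁻¹) {y : ℝ | ε < |y|} := by
  refine (absRpowIntOn (by norm_num) hε).congr_fun (fun y hy => absrpow2 y) (measSet ε)

lemma invfourIntOn {ε : ℝ} (hε : 0 < ε) :
    IntegrableOn (fun y : ℝ => (y ^ 4)⁻¹) {y : ℝ | ε < |y|} := by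
  refine (absRpowIntOn (by norm_num) hε).congr_fun (fun y hy => absrpow4 y) (measSet ε)

lemma invsqInt : ∫ y in {y : ℝ | 1 < |y|}, (y ^ 2)⁻¹ = 2 := by
  rw [← setIntegral_congr_fun (measSet 1) (fun y _ => absrpow2 y)]
  rw [absRpowInt (by norm_num) one_pos]
  norm_num

lemma invfourInt : ∫ y in {y : ℝ | 1 < |y|}, (y ^ 4)⁻¹ = 2 / 3 := by
  rw [← setIntegral_congr_fun (measSet 1) (fun y _ => absrpow4 y)]
  rw [absRpowInt (by norm_num) one_pos]
  norm_num

/-- at a global maximum `X` of a continuous, bounded, square-integrable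
function `u`, the fractional Laplacian satisfies
`Λu(X) ≥ (2/π)·u(X) − (√(2/3)/π)·‖u‖_{L²}`. -/
theorem lower_bound_at_maximum_real
    (u : ℝ → ℝ) (X L : ℝ)
    (hc : Continuous u)
    (hb : ∃ M : ℝ, ∀ x : ℝ, |u x| ≤ M)
    (hL2 : Integrable (fun x => u x ^ 2))
    (hmax : ∀ x : ℝ, u x ≤ u X)
    (hpv : HasPVLambda u X L) :
    2 / Real.pi * u X - Real.sqrt (2 / 3) / Real.pi * Real.sqrt (∫ x : ℝ, u x ^ 2) ≤ L := by
  obtain ⟨M, hM⟩ := hb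
  have hπ : 0 < Real.pi := Real.pi_pos
  set T : ℝ := ∫ x : ℝ, u x ^ 2 with hT
  set F : ℝ → ℝ := fun y => (u X - u (X - y)) / y ^ 2 with hF
  have hFnn : ∀ y, 0 ≤ F y := fun y =>
    div_nonneg (sub_nonneg.2 (hmax _)) (sq_nonneg y)
  have hFmeas : Measurable F :=
    (measurable_const.sub (hc.measurable.comp (measurable_const.sub measurable_id))).div
      (measurable_id.pow_const 2)
  -- integrability of F on {ε < |y|}
  have hFint : ∀ {ε : ℝ}, 0 < ε → IntegrableOn F {y : ℝ | ε < |y|} := by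
    intro ε hε
    refine Integrable.mono' (((absRpowIntOn (show (-2:ℝ) < -1 by norm_num) hε)).const_mul (2 * M))
      hFmeas.aestronglyMeasurable ?_
    refine (ae_restrict_iff' (measSet ε)).2 (ae_of_all _ fun y hy => ?_)
    have hy0 : (0:ℝ) < |y| := lt_trans hε hy
    have h2 : |u X - u (X - y)| ≤ 2 * M := by
      calc |u X - u (X - y)| ≤ |u X| + |u (X - y)| := abs_sub _ _
        _ ≤ M + M := add_le_add (hM X) (hM (X - y))
        _ = 2 * M := by ring
    have : ‖F y‖ = |u X - u (X - y)| * (y ^ 2)⁻¹ := by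
      rw [Real.norm_eq_abs, hF]
      rw [abs_div, div_eq_mul_inv, abs_of_nonneg (sq_nonneg y)]
    rw [this, absrpow2]
    exact mul_le_mul_of_nonneg_right h2 (inv_nonneg.2 (sq_nonneg y))
  -- Cauchy–Schwarz bound on the unit-tail integral of u(X-y)/y²
  have hM0 : (0:ℝ) ≤ M := (abs_nonneg _).trans (hM 0)
  set S : Set ℝ := {y : ℝ | 1 < |y|} with hS
  have huk : IntegrableOn (fun y => u (X - y) * (y ^ 2)⁻¹) S := by
    refine Integrable.mono' (((absRpowIntOn (show (-2:ℝ) < -1 by norm_num) one_pos)).const_mul M)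
      ((hc.measurable.comp (measurable_const.sub measurable_id)).mul
        ((measurable_id.pow_const 2).inv)).aestronglyMeasurable ?_
    refine (ae_restrict_iff' (measSet 1)).2 (ae_of_all _ fun y hy => ?_)
    rw [Real.norm_eq_abs, abs_mul, abs_of_nonneg (inv_nonneg.2 (sq_nonneg y)), absrpow2]
    exact mul_le_mul_of_nonneg_right (hM _) (inv_nonneg.2 (sq_nonneg y))
  have huabs : IntegrableOn (fun y => |u (X - y)| * (y ^ 2)⁻¹) S := by
    have h : IntegrableOn (fun y => |u (X - y) * (y ^ 2)⁻¹|) S := huk.abs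
    refine IntegrableOn.congr_fun h (fun y _ => ?_) (measSet 1)
    rw [abs_mul, abs_of_nonneg (inv_nonneg.2 (sq_nonneg y))]
  have husq : Integrable (fun y => u (X - y) ^ 2) := (hL2.comp_sub_left X)
  have hCS : ∫ y in S, |u (X - y)| * (y ^ 2)⁻¹ ≤ Real.sqrt T * Real.sqrt (2 / 3) := by
    have hconj : Real.HolderConjugate 2 2 := Real.holderConjugate_iff.mpr ⟨by norm_num, by norm_num⟩
    have hfmem : MemLp (fun y => |u (X - y)|) (ENNReal.ofReal 2) (volume.restrict S) := by
      rw [show ENNReal.ofReal 2 = 2 by norm_num]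
      refine (memLp_two_iff_integrable_sq
        ((hc.measurable.comp (measurable_const.sub measurable_id)).abs.aestronglyMeasurable)).2 ?_
      exact (husq.integrableOn.congr_fun (fun y _ => (sq_abs _).symm) (measSet 1))
    have hgmem : MemLp (fun y : ℝ => (y ^ 2)⁻¹) (ENNReal.ofReal 2) (volume.restrict S) := by
      rw [show ENNReal.ofReal 2 = 2 by norm_num]
      refine (memLp_two_iff_integrable_sq
        ((continuous_pow 2).measurable.inv.aestronglyMeasurable)).2 ?_
      exact (invfourIntOn one_pos).congr_fun (fun y _ => by simp only [Pi.inv_apply]; rw [inv_pow, ← pow_mul]) (measSet 1)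
    have := integral_mul_le_Lp_mul_Lq_of_nonneg (μ := volume.restrict S) hconj
      (ae_of_all _ fun y => abs_nonneg _) (ae_of_all _ fun y => inv_nonneg.2 (sq_nonneg y))
      hfmem hgmem
    have e1 : ∫ y in S, |u (X - y)| ^ (2:ℝ) = ∫ y in S, u (X - y) ^ 2 := by
      refine setIntegral_congr_fun (measSet 1) fun y _ => ?_
      rw [show ((2:ℝ) = ((2:ℕ):ℝ)) by norm_num, Real.rpow_natCast, sq_abs]
    have e2 : ∫ y in S, ((y:ℝ) ^ 2)⁻¹ ^ (2:ℝ) = 2/3 := by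
      rw [show (∫ y in S, ((y:ℝ) ^ 2)⁻¹ ^ (2:ℝ)) = ∫ y in S, (y ^ 4)⁻¹ from
        setIntegral_congr_fun (measSet 1) fun y _ => by
          rw [show ((2:ℝ) = ((2:ℕ):ℝ)) by norm_num, Real.rpow_natCast, inv_pow, ← pow_mul]]
      exact invfourInt
    rw [e1, e2] at this
    refine this.trans ?_
    have hA : ∫ y in S, u (X - y) ^ 2 ≤ T := by
      rw [hT, show (∫ x : ℝ, u x ^ 2) = ∫ y, u (X - y) ^ 2 from
        (integral_sub_left_eq_self (fun x => u x ^ 2) volume X).symm]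
      exact setIntegral_le_integral husq (ae_of_all _ fun y => sq_nonneg _)
    have hAnn : (0:ℝ) ≤ ∫ y in S, u (X - y) ^ 2 :=
      setIntegral_nonneg (measSet 1) fun y _ => sq_nonneg _
    have h1 : (∫ y in S, u (X - y) ^ 2) ^ (1/(2:ℝ)) ≤ Real.sqrt T := by
      rw [← Real.sqrt_eq_rpow]
      exact Real.sqrt_le_sqrt hA
    have h2 : ((2:ℝ)/3) ^ (1/(2:ℝ)) = Real.sqrt (2/3) := (Real.sqrt_eq_rpow _).symm
    rw [h2]
    exact mul_le_mul_of_nonneg_right h1 (Real.sqrt_nonneg _) |>.trans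
      (le_of_eq rfl)
  -- the unit-tail lower bound
  have htail : 2 * u X - Real.sqrt (2/3) * Real.sqrt T ≤ ∫ y in S, F y := by
    have hconst : IntegrableOn (fun y : ℝ => u X * (y ^ 2)⁻¹) S :=
      (invsqIntOn one_pos).const_mul (u X)
    have hsplit : ∫ y in S, F y
        = (∫ y in S, u X * (y ^ 2)⁻¹) - ∫ y in S, u (X - y) * (y ^ 2)⁻¹ := by
      rw [← integral_sub hconst huk]
      refine setIntegral_congr_fun (measSet 1) fun y _ => ?_
      rw [hF]; ring
    have hc1 : ∫ y in S, u X * (y ^ 2)⁻¹ = u X * 2 := by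
      rw [integral_const_mul, invsqInt]
    have hc2 : ∫ y in S, u (X - y) * (y ^ 2)⁻¹ ≤ Real.sqrt T * Real.sqrt (2/3) := by
      refine le_trans ?_ hCS
      refine integral_mono_ae huk huabs (ae_of_all _ fun y => ?_)
      calc u (X - y) * (y ^ 2)⁻¹ ≤ |u (X - y)| * (y ^ 2)⁻¹ :=
        mul_le_mul_of_nonneg_right (le_abs_self _) (inv_nonneg.2 (sq_nonneg y))
      _ = _ := rfl
    rw [hsplit, hc1]
    nlinarith [Real.sqrt_nonneg T, Real.sqrt_nonneg (2/3 : ℝ)]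
  -- eventually bound for the truncated integrals
  have hev : ∀ᶠ ε in nhdsWithin (0:ℝ) (Set.Ioi 0),
      2 / Real.pi * u X - Real.sqrt (2/3) / Real.pi * Real.sqrt T ≤ pvIntegral u X ε := by
    filter_upwards [Ioo_mem_nhdsGT_of_mem (α := ℝ) ⟨le_refl 0, one_pos⟩] with ε hε
    obtain ⟨hε0, hε1⟩ := hε
    have hsub : S ⊆ {y : ℝ | ε < |y|} := fun y hy => lt_trans hε1 hy
    have hmono : ∫ y in S, F y ≤ ∫ y in {y : ℝ | ε < |y|}, F y := by
      refine setIntegral_mono_set (hFint hε0)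
        (ae_of_all _ fun y => hFnn y) (HasSubset.Subset.eventuallyLE hsub)
    have key : 2 * u X - Real.sqrt (2/3) * Real.sqrt T ≤ ∫ y in {y : ℝ | ε < |y|}, F y :=
      htail.trans hmono
    have h1π : (0:ℝ) ≤ 1 / Real.pi := by positivity
    have := mul_le_mul_of_nonneg_left key h1π
    calc 2 / Real.pi * u X - Real.sqrt (2/3) / Real.pi * Real.sqrt T
        = 1 / Real.pi * (2 * u X - Real.sqrt (2/3) * Real.sqrt T) := by ring
      _ ≤ 1 / Real.pi * ∫ y in {y : ℝ | ε < |y|}, F y := this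
      _ = pvIntegral u X ε := rfl
  exact ge_of_tendsto hpv hev
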